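/- arXiv:2605.10010 — 7 statements merged into one kernel-verified Lean document; each statement's English description precedes it below -/
import Mathlib

section
/- Let G be a finite group, S ⊆ G a nonempty subset, and H_S the smallest normal subgroup of G such that [G,G] ⊆ H_S and S is contained in a single left coset of H_S. Fix k ≥ 1 and a finite set ι of variables. Consider an instance consisting of constraints C₁,…,C_m, where the j-th constraint is specified by coefficients a_j : {0,…,k−1} → G and an injective tuple of variable indices v_j : {0,…,k−1} → ι, and an assignment x : ι → G satisfies C_j if and only if a_j(0)·x(v_j(0))·a_j(1)·x(v_j(1))⋯a_j(k−1)·x(v_j(k−1)) ∈ S. If there exists an assignment x : ι → G satisfying all m constraints, then there exists an assignment y : ι → G satisfying at least (|S|/|H_S|)·m of the constraints. -/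
open scoped Pointwise

/-- Let `G` be a finite group, `S ⊆ G` nonempty, and `H` the smallest
normal subgroup of `G` with `[G,G] ⊆ H` and `S` contained in a single left coset of `H`.
Given a satisfiable instance of `Max-Ek-LIN_S(G)` with `m` constraints (the `j`-th
constraint being `a j 0 * x (v j 0) * a j 1 * x (v j 1) * ⋯ ∈ S` with `v j` injective),
there is an assignment satisfying at least `(|S| / |H|) * m` constraints. -/
theorem stmt3 {G : Type*} [Group G] [Fintype G] [DecidableEq G]
    (S : Finset G) (hS : S.Nonempty)
    (H : Subgroup G) [H.Normal]
    (hcomm : commutator G ≤ H)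
    (hcoset : ∃ g : G, (S : Set G) ⊆ g • (H : Set G))
    (hmin : ∀ N : Subgroup G, N.Normal → commutator G ≤ N →
      (∃ g : G, (S : Set G) ⊆ g • (N : Set G)) → H ≤ N)
    (ι : Type*) [Fintype ι] (k m : ℕ) (hk : 1 ≤ k)
    (a : Fin m → Fin k → G) (v : Fin m → Fin k → ι)
    (hv : ∀ j, Function.Injective (v j))
    (hsat : ∃ x : ι → G, ∀ j : Fin m,
      (List.ofFn (fun i => a j i * x (v j i))).prod ∈ S) :
    ∃ y : ι → G,
      (S.card : ℝ) / (Nat.card H) * m ≤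
        (Finset.univ.filter (fun j : Fin m =>
          (List.ofFn (fun i => a j i * y (v j i))).prod ∈ S)).card := by
  classical
  obtain ⟨x, hx⟩ := hsat
  rcases Nat.eq_zero_or_pos m with hm | hm
  · subst hm
    exact ⟨x, by simp⟩
  obtain ⟨k', rfl⟩ : ∃ k', k = k' + 1 := ⟨k - 1, (Nat.succ_pred_eq_of_pos hk).symm⟩
  obtain ⟨g, hg⟩ := hcoset
  have hι : Nonempty ι := ⟨v ⟨0, hm⟩ 0⟩
  set π : G →* G ⧸ H := QuotientGroup.mk' H with hπdef
  have hπ1 : ∀ w : G, π w = 1 ↔ w ∈ H := fun w => QuotientGroup.eq_one_iff w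
  have hπmul : ∀ (w : G) (t : H), π (w * t) = π w := by
    intro w t
    have h1 : π (t : G) = 1 := (hπ1 t).2 t.2
    rw [map_mul, h1, mul_one]
  have hπS : ∀ s ∈ S, π s = π g := by
    intro s hs
    obtain ⟨t, ht, hts⟩ := hg hs
    have hs2 : s = g * t := by rw [← hts]; rfl
    rw [hs2]
    exact hπmul g ⟨t, ht⟩
  -- the satisfaction predicate for shifted assignments
  let sat : (ι → H) → Fin m → Prop := fun h j =>
    (List.ofFn fun i => a j i * (x (v j i) * ((h (v j i) : G)))).prod ∈ S
  have key : ∀ j : Fin m,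
      (Finset.univ.filter fun h : ι → H => sat h j).card
        = S.card * (Fintype.card H) ^ (Fintype.card ι - 1) := by
    intro j
    set i0 := v j 0 with hi0
    let e := Equiv.funSplitAt i0 ↥H
    have hne : ∀ i : Fin k', v j i.succ ≠ i0 := fun i hc => Fin.succ_ne_zero i (hv j hc)
    set A : G := a j 0 * x (v j 0) with hA
    set Rr : ({ l // l ≠ i0 } → H) → G := fun r =>
      (List.ofFn fun i : Fin k' =>
        a j i.succ * (x (v j i.succ) * ((r ⟨v j i.succ, hne i⟩ : G)))).prod with hRr
    have hsat_iff : ∀ (t : H) (r : { l // l ≠ i0 } → H),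
        sat (e.symm (t, r)) j ↔ A * t * Rr r ∈ S := by
      intro t r
      have h1 : (e.symm (t, r)) i0 = t := by simp [e]
      have h2 : ∀ i : Fin k', (e.symm (t, r)) (v j i.succ) = r ⟨v j i.succ, hne i⟩ := by
        intro i; simp [e, Equiv.funSplitAt, Equiv.piSplitAt, hne i]
      show (List.ofFn fun i => a j i * (x (v j i) * ((e.symm (t, r)) (v j i) : G))).prod ∈ S ↔ _
      rw [List.ofFn_succ, List.prod_cons]
      have h3 : (fun i : Fin k' =>
          a j i.succ * (x (v j i.succ) * ((e.symm (t, r)) (v j i.succ) : G)))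
          = fun i : Fin k' =>
          a j i.succ * (x (v j i.succ) * ((r ⟨v j i.succ, hne i⟩ : G))) := by
        funext i; rw [h2 i]
      rw [h3]
      have h4 : (e.symm (t, r)) (v j 0) = t := h1
      rw [h4, ← mul_assoc (a j 0)]
    have hARr : ∀ r, π (A * Rr r) = π g := by
      intro r
      have htail : π (Rr r)
          = π ((List.ofFn fun i : Fin k' => a j i.succ * x (v j i.succ)).prod) := by
        show π ((List.ofFn fun i : Fin k' =>
            a j i.succ * (x (v j i.succ) * ((r ⟨v j i.succ, hne i⟩ : G)))).prod) = _
        rw [map_list_prod, map_list_prod, List.map_ofFn, List.map_ofFn]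
        have hfun : (⇑π ∘ fun i : Fin k' =>
            a j i.succ * (x (v j i.succ) * ((r ⟨v j i.succ, hne i⟩ : G))))
            = (⇑π ∘ fun i : Fin k' => a j i.succ * x (v j i.succ)) := by
          funext i
          show π (a j i.succ * (x (v j i.succ) * ((r ⟨v j i.succ, hne i⟩ : G))))
              = π (a j i.succ * x (v j i.succ))
          rw [← mul_assoc]
          exact hπmul _ _
        rw [hfun]
      calc π (A * Rr r) = π A * π (Rr r) := map_mul _ _ _
        _ = π (a j 0 * x (v j 0))
            * π ((List.ofFn fun i : Fin k' => a j i.succ * x (v j i.succ)).prod) := by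
            rw [htail]
        _ = π ((List.ofFn fun i : Fin (k' + 1) => a j i * x (v j i)).prod) := by
            rw [List.ofFn_succ, List.prod_cons]
            simp [map_mul]
        _ = π g := hπS _ (hx j)
    have hmem : ∀ r, ∀ s ∈ S, A⁻¹ * s * (Rr r)⁻¹ ∈ H := by
      intro r s hs
      have hAR : π A * π (Rr r) = π g := by rw [← map_mul]; exact hARr r
      rw [← hπ1, map_mul, map_mul, map_inv, map_inv, hπS s hs, ← hAR]
      group
    have inner : ∀ r, (Finset.univ.filter fun t : H => A * t * Rr r ∈ S).card = S.card := by
      intro r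
      refine Finset.card_bij' (fun t _ => A * (t : G) * Rr r)
        (fun s hs => ⟨A⁻¹ * s * (Rr r)⁻¹, hmem r s hs⟩) ?_ ?_ ?_ ?_
      · intro t ht
        exact (Finset.mem_filter.1 ht).2
      · intro s hs
        simp only [Finset.mem_filter, Finset.mem_univ, true_and]
        show A * (A⁻¹ * s * (Rr r)⁻¹) * Rr r ∈ S
        group
        simpa using hs
      · intro t ht
        ext
        show A⁻¹ * (A * (t : G) * Rr r) * (Rr r)⁻¹ = t
        group
      · intro s hs
        show A * (A⁻¹ * s * (Rr r)⁻¹) * Rr r = s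
        group
    have hsplit : (Finset.univ.filter fun h : ι → H => sat h j).card
        = ∑ r : { l // l ≠ i0 } → H,
            (Finset.univ.filter fun t : H => A * t * Rr r ∈ S).card := by
      rw [Finset.card_filter]
      rw [← Equiv.sum_comp e.symm (fun h : ι → H => if sat h j then (1 : ℕ) else 0)]
      rw [Fintype.sum_prod_type]
      rw [Finset.sum_comm]
      refine Finset.sum_congr rfl fun r _ => ?_
      rw [Finset.card_filter]
      refine Finset.sum_congr rfl fun t _ => ?_
      simp only [hsat_iff]
    rw [hsplit]
    simp only [inner]
    rw [Finset.sum_const, Finset.card_univ, smul_eq_mul, mul_comm]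
    congr 2
    rw [Fintype.card_fun]
    congr 1
    have : Fintype.card { l // l ≠ i0 } = Fintype.card { l : ι // ¬ l = i0 } := rfl
    rw [this, Fintype.card_subtype_compl, Fintype.card_subtype_eq]
  -- double counting
  let cnt : (ι → H) → ℕ := fun h => (Finset.univ.filter fun j : Fin m => sat h j).card
  have total : ∑ h : ι → H, cnt h
      = m * (S.card * (Fintype.card H) ^ (Fintype.card ι - 1)) := by
    have : ∀ h : ι → H, cnt h = ∑ j : Fin m, if sat h j then 1 else 0 := by
      intro h; exact Finset.card_filter _ _
    simp only [this]
    rw [Finset.sum_comm]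
    have : ∀ j : Fin m, (∑ h : ι → H, if sat h j then (1 : ℕ) else 0)
        = S.card * (Fintype.card H) ^ (Fintype.card ι - 1) := by
      intro j; rw [← Finset.card_filter]; exact key j
    simp only [this]
    rw [Finset.sum_const, Finset.card_univ, Fintype.card_fin, smul_eq_mul]
  -- averaging
  have hHpos : 0 < Fintype.card H := Fintype.card_pos
  have hιpos : 0 < Fintype.card ι := Fintype.card_pos
  have hsum : ∑ _h : ι → H, ((S.card : ℝ) / (Nat.card H) * m)
      ≤ ∑ h : ι → H, (cnt h : ℝ) := by
    rw [← Nat.cast_sum, total, Finset.sum_const, Finset.card_univ, Fintype.card_fun,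
      Nat.card_eq_fintype_card, nsmul_eq_mul]
    have hc : (Fintype.card H : ℝ) ≠ 0 := Nat.cast_ne_zero.2 hHpos.ne'
    have hn : Fintype.card ι - 1 + 1 = Fintype.card ι := Nat.succ_pred_eq_of_pos hιpos
    apply le_of_eq
    rw [← hn]
    push_cast
    rw [pow_succ]
    field_simp
  obtain ⟨h, -, hh⟩ := Finset.exists_le_of_sum_le Finset.univ_nonempty hsum
  exact ⟨fun i => x i * h i, hh⟩
end

section
/- Let G be a finite group, n ≥ 1, and H a subgroup of G. Let ρ : G → ℂˣ be a group homomorphism such that ρ(h₀) ≠ 1 for some h₀ ∈ H, and let β₁,…,βₙ : G → ℂˣ be group homomorphisms with βᵢ(h) = 1 for every h ∈ H and every i. Let f : Gⁿ → G be a folded function. Then ∑_{x ∈ Gⁿ} ρ(f(x)) · ∏_{i=1}^{n} βᵢ(xᵢ) = 0. -/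
/-- Let `G` be a finite group, `n ≥ 1`, `H ≤ G`, `ρ : G → ℂˣ` a character
that is nontrivial on `H`, and `β₁, …, βₙ : G → ℂˣ` characters that are trivial on `H`.
For any folded `f : Gⁿ → G`, the sum `∑_{x ∈ Gⁿ} ρ(f(x)) ∏ᵢ βᵢ(xᵢ)` vanishes. -/
theorem stmt4 {G : Type*} [Group G] [Fintype G] (n : ℕ) (hn : 1 ≤ n)
    (H : Subgroup G)
    (ρ : G →* ℂˣ) (hρ : ∃ h₀ ∈ H, ρ h₀ ≠ 1)
    (β : Fin n → (G →* ℂˣ)) (hβ : ∀ i : Fin n, ∀ h ∈ H, β i h = 1)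
    (f : (Fin n → G) → G)
    (hf : ∀ c : G, ∀ x : Fin n → G, f (fun i => c * x i) = c * f x) :
    ∑ x : Fin n → G, (ρ (f x) : ℂ) * ∏ i : Fin n, (β i (x i) : ℂ) = 0 := by
  obtain ⟨h₀, hH, hne⟩ := hρ
  set S : ℂ := ∑ x : Fin n → G, (ρ (f x) : ℂ) * ∏ i : Fin n, (β i (x i) : ℂ) with hS
  have key : S = (ρ h₀ : ℂ) * S := by
    rw [hS, Finset.mul_sum]
    exact (Fintype.sum_equiv (Equiv.piCongrRight fun _ => Equiv.mulLeft h₀⁻¹)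
      _ _ (fun x => by
        show _ = _ * ((ρ (f fun i => h₀⁻¹ * x i) : ℂ) * ∏ i : Fin n, (β i (h₀⁻¹ * x i) : ℂ))
        rw [hf h₀⁻¹ x, map_mul]
        have : ∀ i : Fin n, ((β i (h₀⁻¹ * x i)) : ℂ) = (β i (x i) : ℂ) := by
          intro i
          rw [map_mul, hβ i h₀⁻¹ (inv_mem hH), one_mul]
        rw [Finset.prod_congr rfl fun i _ => this i, map_inv]
        push_cast
        field_simp))
  have hne' : (ρ h₀ : ℂ) ≠ 1 := fun h => hne (Units.ext h)
  have : ((ρ h₀ : ℂ) - 1) * S = 0 := by rw [sub_mul, ← key]; ring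
  rcases mul_eq_zero.mp this with h | h
  · exact absurd (sub_eq_zero.mp h) hne'
  · exact h
end

section
/- Let G be a finite group, n ≥ 1, and let ρ be an irreducible finite-dimensional complex representation of G on a vector space V with dim V ≥ 2. Let α₁,…,αₙ : G → ℂˣ be (possibly trivial) group homomorphisms, and let f : Gⁿ → G be a folded function. Then the linear-map-valued sum ∑_{x ∈ Gⁿ} (∏_{i=1}^{n} αᵢ(xᵢ)) · ρ(f(x)) equals 0. -/
/-- Let `G` be a finite group, `n ≥ 1`, `ρ` an irreducible complex
representation of `G` on `V` with `dim V ≥ 2`, `α₁, …, αₙ : G → ℂˣ` characters, and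
`f : Gⁿ → G` folded. Then `∑_{x ∈ Gⁿ} (∏ᵢ αᵢ(xᵢ)) • ρ(f(x)) = 0` as a linear map. -/
theorem stmt5 {G : Type*} [Group G] [Fintype G] (n : ℕ) (hn : 1 ≤ n)
    {V : Type*} [AddCommGroup V] [Module ℂ V] [FiniteDimensional ℂ V]
    (ρ : G →* (V →ₗ[ℂ] V))
    (hirr : ∀ W : Submodule ℂ V, (∀ g : G, ∀ v ∈ W, ρ g v ∈ W) → W = ⊥ ∨ W = ⊤)
    (hdim : 2 ≤ Module.finrank ℂ V)
    (α : Fin n → (G →* ℂˣ))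
    (f : (Fin n → G) → G)
    (hf : ∀ c : G, ∀ x : Fin n → G, f (fun i => c * x i) = c * f x) :
    ∑ x : Fin n → G, (∏ i : Fin n, (α i (x i) : ℂ)) • ρ (f x) = 0 := by
  set T : V →ₗ[ℂ] V := ∑ x : Fin n → G, (∏ i : Fin n, (α i (x i) : ℂ)) • ρ (f x) with hT
  have hβ : ∀ c : G, (∏ i : Fin n, (α i c : ℂ)) ≠ 0 := by
    intro c
    exact Finset.prod_ne_zero_iff.mpr fun i _ => (α i c).ne_zero
  have key : ∀ c : G, ∀ v : V, ρ c (T v) = (∏ i : Fin n, (α i c : ℂ))⁻¹ • T v := by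
    intro c v
    have h1 : (∏ i : Fin n, (α i c : ℂ)) • ρ c (T v) = T v := by
      rw [hT]
      simp only [LinearMap.sum_apply, LinearMap.smul_apply, map_sum, map_smul,
        Finset.smul_sum]
      refine Fintype.sum_bijective (fun x : Fin n → G => fun i => c * x i)
        ((Equiv.piCongrRight fun _ => Equiv.mulLeft c).bijective) _ _ ?_
      intro x
      rw [hf]
      simp only [map_mul, Units.val_mul, Finset.prod_mul_distrib, smul_smul]
      rw [Module.End.mul_apply]
    calc ρ c (T v) = (∏ i : Fin n, (α i c : ℂ))⁻¹ •
          ((∏ i : Fin n, (α i c : ℂ)) • ρ c (T v)) := by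
            rw [smul_smul, inv_mul_cancel₀ (hβ c), one_smul]
      _ = (∏ i : Fin n, (α i c : ℂ))⁻¹ • T v := by rw [h1]
  have hrange := hirr (LinearMap.range T) (by
    intro g v hv
    obtain ⟨u, rfl⟩ := hv
    rw [key g u]
    exact Submodule.smul_mem _ _ ⟨u, rfl⟩)
  rcases hrange with h | h
  · exact LinearMap.range_eq_bot.mp h
  · -- T surjective, so ρ c is scalar; contradiction with irreducibility and dim ≥ 2
    exfalso
    have hsurj : Function.Surjective T := LinearMap.range_eq_top.mp h
    have hscal : ∀ c : G, ∀ w : V, ρ c w = (∏ i : Fin n, (α i c : ℂ))⁻¹ • w := by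
      intro c w
      obtain ⟨u, rfl⟩ := hsurj w
      exact key c u
    have : Nontrivial V := by
      have := Module.nontrivial_of_finrank_pos (R := ℂ) (M := V) (by omega)
      exact this
    obtain ⟨v, hv⟩ := exists_ne (0 : V)
    have hspan := hirr (Submodule.span ℂ {v}) (by
      intro g w hw
      rw [hscal g w]
      exact Submodule.smul_mem _ _ hw)
    rcases hspan with h' | h'
    · exact hv (by simpa using h'.le (Submodule.mem_span_singleton_self v))
    · have h1 := finrank_span_singleton (K := ℂ) hv
      rw [h', finrank_top ℂ V] at h1
      omega
end

section
/- Let G be a finite group. There exists a real number ε > 0, depending only on G, with the following property: for every nonempty subset S ⊆ G, letting H_S be the smallest normal subgroup of G such that [G,G] ⊆ H_S and S is contained in a single left coset of H_S, and for every group homomorphism β : G → ℂˣ for which there exists h ∈ H_S with β(h) ≠ 1, one has |∑_{s ∈ S} β(s⁻¹)| ≤ (1 − ε)·|S|. -/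
open scoped Pointwise

lemma abs_add_lt_two_of_ne {z w : ℂ} (hz : ‖z‖ = 1) (hw : ‖w‖ = 1)
    (hne : z ≠ w) : ‖z + w‖ < 2 := by
  have hzsq : Complex.normSq z = 1 := by
    have := Complex.sq_norm z; rw [hz] at this; simpa using this.symm
  have hwsq : Complex.normSq w = 1 := by
    have := Complex.sq_norm w; rw [hw] at this; simpa using this.symm
  have habs : ‖z * (starRingEnd ℂ) w‖ = 1 := by
    rw [norm_mul, Complex.norm_conj, hz, hw, one_mul]
  have hre : (z * (starRingEnd ℂ) w).re < 1 := by
    rcases lt_or_eq_of_le ((Complex.re_le_norm _).trans_eq habs) with h | h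
    · exact h
    · exfalso
      -- re = abs = 1 and normSq = 1 forces z * conj w = 1, hence z = w
      have hns : Complex.normSq (z * (starRingEnd ℂ) w) = 1 := by
        have := Complex.sq_norm (z * (starRingEnd ℂ) w); rw [habs] at this
        simpa using this.symm
      have him : (z * (starRingEnd ℂ) w).im = 0 := by
        have := Complex.normSq_apply (z * (starRingEnd ℂ) w)
        rw [hns, h] at this
        nlinarith [this]
      have heq : z * (starRingEnd ℂ) w = 1 := by
        apply Complex.ext <;> simp [h, him]
      apply hne
      have hwinv : (starRingEnd ℂ) w * w = 1 := by
        rw [mul_comm, Complex.mul_conj, hwsq]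
        norm_num
      calc z = z * ((starRingEnd ℂ) w * w) := by rw [hwinv, mul_one]
        _ = (z * (starRingEnd ℂ) w) * w := by ring
        _ = w := by rw [heq, one_mul]
  have hns : Complex.normSq (z + w) < 4 := by
    rw [Complex.normSq_add, hzsq, hwsq]; linarith
  rw [Complex.norm_def]
  have : (4:ℝ) = 2^2 := by norm_num
  calc √(Complex.normSq (z + w)) < √4 := by
        apply Real.sqrt_lt_sqrt (Complex.normSq_nonneg _) hns
    _ = 2 := by rw [show (4:ℝ) = 2^2 by norm_num, Real.sqrt_sq (by norm_num)]

/-- For every finite group `G` there is `ε > 0`, depending only on `G`,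
such that for every nonempty `S ⊆ G`, with `H` the smallest normal subgroup of `G`
containing `[G,G]` such that `S` lies in a single left coset of `H`, and every character
`β : G → ℂˣ` that is nontrivial on `H`, one has `|∑_{s ∈ S} β(s⁻¹)| ≤ (1 - ε)|S|`. -/
theorem stmt7 {G : Type*} [Group G] [Fintype G] [DecidableEq G] :
    ∃ ε : ℝ, 0 < ε ∧
      ∀ S : Finset G, S.Nonempty →
        ∀ H : Subgroup G, H.Normal → commutator G ≤ H →
          (∃ g : G, (S : Set G) ⊆ g • (H : Set G)) →
          (∀ N : Subgroup G, N.Normal → commutator G ≤ N →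
            (∃ g : G, (S : Set G) ⊆ g • (N : Set G)) → H ≤ N) →
          ∀ β : G →* ℂˣ, (∃ h ∈ H, β h ≠ 1) →
            ‖∑ s ∈ S, (β s⁻¹ : ℂ)‖ ≤ (1 - ε) * S.card := by
  classical
  set n := Fintype.card G with hn
  have hn0 : 0 < n := Fintype.card_pos
  set R := Polynomial.nthRootsFinset n (1:ℂ) with hR
  set P := (R ×ˢ R).filter (fun p => p.1 ≠ p.2) with hP
  set D := insert (1:ℝ) (P.image (fun p => 2 - ‖p.1 + p.2‖)) with hD
  have hDne : D.Nonempty := ⟨1, Finset.mem_insert_self _ _⟩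
  -- every element of an nthRootsFinset has absolute value 1
  have habsR : ∀ z ∈ R, ‖z‖ = 1 := by
    intro z hz
    rw [hR, Polynomial.mem_nthRootsFinset hn0 (1:ℂ)] at hz
    simpa using Complex.norm_eq_one_of_pow_eq_one hz hn0.ne'
  set δ := D.min' hDne with hδ
  have hδpos : 0 < δ := by
    rw [hδ]
    apply (Finset.lt_min'_iff _ _).2
    intro y hy
    rw [hD, Finset.mem_insert] at hy
    rcases hy with rfl | hy
    · norm_num
    · obtain ⟨p, hp, rfl⟩ := Finset.mem_image.1 hy
      rw [hP, Finset.mem_filter, Finset.mem_product] at hp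
      have := abs_add_lt_two_of_ne (habsR _ hp.1.1) (habsR _ hp.1.2) hp.2
      linarith
  refine ⟨δ / n, by positivity, ?_⟩
  intro S hS H hHnorm hcomm hcoset hmin β hβ
  obtain ⟨h0, hh0H, hβh0⟩ := hβ
  obtain ⟨s, hsS⟩ := hS
  -- values of β are in R
  have hval : ∀ g : G, ((β g : ℂˣ) : ℂ) ∈ R := by
    intro g
    rw [hR, Polynomial.mem_nthRootsFinset hn0 (1:ℂ)]
    have : (β g) ^ n = 1 := by rw [← map_pow, hn, pow_card_eq_one, map_one]
    rw [← Units.val_pow_eq_pow_val, this, Units.val_one]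
  have habs1 : ∀ g : G, ‖((β g : ℂˣ) : ℂ)‖ = 1 := fun g => habsR _ (hval g)
  -- find t ∈ S with distinct β value
  have hex : ∃ t ∈ S, ((β t⁻¹ : ℂˣ) : ℂ) ≠ ((β s⁻¹ : ℂˣ) : ℂ) := by
    by_contra hcon
    push_neg at hcon
    have hker : H ≤ β.ker := by
      apply hmin β.ker β.normal_ker (Abelianization.commutator_subset_ker β)
      refine ⟨s, fun t ht => ?_⟩
      rw [mem_leftCoset_iff]
      have hts : ((β t⁻¹ : ℂˣ) : ℂ) = ((β s⁻¹ : ℂˣ) : ℂ) := hcon t ht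
      have hts' : β t⁻¹ = β s⁻¹ := Units.ext hts
      simp only [map_inv] at hts'
      have hβts : β t = β s := inv_injective hts'
      show β (s⁻¹ * t) = 1
      simp [map_mul, map_inv, hβts]
    exact hβh0 (hker hh0H)
  obtain ⟨t, htS, hne⟩ := hex
  have hts : t ≠ s := fun h => hne (by rw [h])
  have htS' : t ∈ S.erase s := Finset.mem_erase.2 ⟨hts, htS⟩
  -- δ ≤ 2 - |βs⁻¹ + βt⁻¹|
  have hpair : δ ≤ 2 - ‖((β s⁻¹ : ℂˣ) : ℂ) + ((β t⁻¹ : ℂˣ) : ℂ)‖ := by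
    apply Finset.min'_le
    rw [hD]
    apply Finset.mem_insert_of_mem
    apply Finset.mem_image.2
    refine ⟨(((β s⁻¹ : ℂˣ) : ℂ), ((β t⁻¹ : ℂˣ) : ℂ)), ?_, rfl⟩
    rw [hP, Finset.mem_filter, Finset.mem_product]
    exact ⟨⟨hval _, hval _⟩, fun h => hne h.symm⟩
  -- split the sum
  have hsplit : ∑ u ∈ S, ((β u⁻¹ : ℂˣ) : ℂ) =
      (((β s⁻¹ : ℂˣ) : ℂ) + ((β t⁻¹ : ℂˣ) : ℂ)) + ∑ u ∈ (S.erase s).erase t, ((β u⁻¹ : ℂˣ) : ℂ) := by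
    rw [← Finset.add_sum_erase S _ hsS, ← Finset.add_sum_erase (S.erase s) _ htS', add_assoc]
  have hrest : ‖∑ u ∈ (S.erase s).erase t, ((β u⁻¹ : ℂˣ) : ℂ)‖ ≤
      ((S.erase s).erase t).card := by
    calc ‖∑ u ∈ (S.erase s).erase t, ((β u⁻¹ : ℂˣ) : ℂ)‖
        ≤ ∑ u ∈ (S.erase s).erase t, ‖((β u⁻¹ : ℂˣ) : ℂ)‖ :=
          norm_sum_le _ _
      _ = ∑ u ∈ (S.erase s).erase t, (1:ℝ) := by
          exact Finset.sum_congr rfl fun u _ => habs1 u⁻¹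
      _ = ((S.erase s).erase t).card := by simp
  have hcard2 : ((S.erase s).erase t).card + 2 = S.card := by
    rw [Finset.card_erase_of_mem htS', Finset.card_erase_of_mem hsS]
    have h1 : 1 ≤ S.card := Finset.card_pos.2 ⟨s, hsS⟩
    have h2 : 1 ≤ (S.erase s).card := Finset.card_pos.2 ⟨t, htS'⟩
    rw [Finset.card_erase_of_mem hsS] at h2
    omega
  have key : ‖∑ u ∈ S, ((β u⁻¹ : ℂˣ) : ℂ)‖ ≤ (S.card : ℝ) - δ := by
    rw [hsplit]
    calc ‖_‖ ≤ ‖((β s⁻¹ : ℂˣ) : ℂ) + ((β t⁻¹ : ℂˣ) : ℂ)‖ +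
          ‖∑ u ∈ (S.erase s).erase t, ((β u⁻¹ : ℂˣ) : ℂ)‖ := norm_add_le _ _
      _ ≤ (2 - δ) + ((S.erase s).erase t).card := by
          apply add_le_add _ hrest; linarith
      _ = (S.card : ℝ) - δ := by
          have : (((S.erase s).erase t).card : ℝ) + 2 = (S.card : ℝ) := by exact_mod_cast hcard2
          linarith
  -- conclude
  have hScard : (S.card : ℝ) ≤ n := by exact_mod_cast Finset.card_le_univ S
  have hSpos : (0:ℝ) < S.card := by exact_mod_cast Finset.card_pos.2 ⟨s, hsS⟩
  have hnpos : (0:ℝ) < n := by exact_mod_cast hn0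
  calc ‖∑ u ∈ S, ((β u⁻¹ : ℂˣ) : ℂ)‖ ≤ (S.card : ℝ) - δ := key
    _ ≤ (S.card : ℝ) - (δ / n) * S.card := by
        have : (δ / n) * S.card ≤ δ := by
          rw [div_mul_eq_mul_div, div_le_iff₀ hnpos]
          nlinarith
        linarith
    _ = (1 - δ / n) * S.card := by ring
end

section
/- Let n ≥ 2 and let z₁,…,z_m ∈ ℂ satisfy zᵢⁿ = 1 for every i. If the zᵢ are not all equal, then |∑_{i=1}^{m} zᵢ| ≤ (m − 2) + |1 + e^{2πi/n}|. -/
open Complex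

lemma aux_abs_sq (θ : ℝ) :
    ‖1 + Complex.exp (θ * Complex.I)‖ ^ 2 = 2 + 2 * Real.cos θ := by
  rw [Complex.sq_norm, Complex.exp_mul_I]
  simp [Complex.normSq_apply, Complex.cos_ofReal_re, Complex.sin_ofReal_re]
  nlinarith [Real.sin_sq_add_cos_sq θ]

lemma aux_abs_le (θ₁ θ₂ : ℝ) (h : Real.cos θ₁ ≤ Real.cos θ₂) :
    ‖1 + Complex.exp (θ₁ * Complex.I)‖ ≤
      ‖1 + Complex.exp (θ₂ * Complex.I)‖ := by
  have h1 := aux_abs_sq θ₁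
  have h2 := aux_abs_sq θ₂
  have n1 := norm_nonneg (1 + Complex.exp (θ₁ * Complex.I))
  have n2 := norm_nonneg (1 + Complex.exp (θ₂ * Complex.I))
  nlinarith

lemma aux_cos (n k : ℕ) (hn : 2 ≤ n) (hk1 : 1 ≤ k) (hk : k < n) :
    Real.cos (2 * Real.pi * k / n) ≤ Real.cos (2 * Real.pi / n) := by
  have hn0 : (0:ℝ) < n := by positivity
  have hpi := Real.pi_pos
  have hbase : 2 * Real.pi / n ≤ Real.pi := by
    rw [div_le_iff₀ hn0]
    have h2n : (2:ℝ) ≤ n := by exact_mod_cast hn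
    nlinarith
  have hbase0 : 0 ≤ 2 * Real.pi / n := by positivity
  rcases le_or_gt (2 * Real.pi * k / n) Real.pi with hle | hgt
  · apply Real.cos_le_cos_of_nonneg_of_le_pi hbase0 hle
    rw [div_le_div_iff₀ hn0 hn0]
    have h1k : (1:ℝ) ≤ k := by exact_mod_cast hk1
    nlinarith [mul_nonneg (mul_nonneg (by linarith : (0:ℝ) ≤ 2 * Real.pi) (by linarith : (0:ℝ) ≤ (k:ℝ) - 1)) hn0.le]
  · have : Real.cos (2 * Real.pi * k / n) =
        Real.cos (2 * Real.pi - 2 * Real.pi * k / n) := by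
      rw [Real.cos_two_pi_sub]
    rw [this]
    apply Real.cos_le_cos_of_nonneg_of_le_pi hbase0 (by linarith)
    have hkn : (k:ℝ) ≤ n - 1 := by
      have : (k:ℝ) + 1 ≤ n := by exact_mod_cast hk
      linarith
    have e : 2 * Real.pi - 2 * Real.pi * k / n = 2 * Real.pi * ((n:ℝ) - k) / n := by
      field_simp
    rw [e, div_le_div_iff₀ hn0 hn0]
    nlinarith [mul_nonneg (mul_nonneg (by linarith : (0:ℝ) ≤ 2 * Real.pi) (by linarith : (0:ℝ) ≤ (n:ℝ) - k - 1)) hn0.le]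

/-- Let `n ≥ 2` and let `z₁, …, z_m` be complex `n`-th roots of unity.
If the `zᵢ` are not all equal, then `|∑ᵢ zᵢ| ≤ (m - 2) + |1 + e^{2πi/n}|`. -/
theorem stmt8 (n m : ℕ) (hn : 2 ≤ n) (z : Fin m → ℂ)
    (hz : ∀ i, z i ^ n = 1) (hne : ¬ ∀ i j, z i = z j) :
    ‖∑ i, z i‖ ≤
      ((m : ℝ) - 2) + ‖1 + Complex.exp (2 * Real.pi * Complex.I / n)‖ := by
  push_neg at hne
  obtain ⟨i, j, hij⟩ := hne
  have hij' : i ≠ j := fun h => hij (by rw [h])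
  have hn0 : n ≠ 0 := by omega
  have hone : ∀ k, ‖z k‖ = 1 := fun k =>
    Complex.norm_eq_one_of_pow_eq_one (hz k) hn0
  have hzi : z i ≠ 0 := fun h => by
    have := hone i; rw [h] at this; simp at this
  set ζ := z j / z i with hζ
  have hζn : ζ ^ n = 1 := by rw [hζ, div_pow, hz, hz]; simp
  have hζ1 : ζ ≠ 1 := by
    intro h
    rw [hζ, div_eq_one_iff_eq hzi] at h
    exact hij h.symm
  have : NeZero n := ⟨hn0⟩
  have hprim := Complex.isPrimitiveRoot_exp n hn0
  obtain ⟨k, hkn, hke⟩ := hprim.eq_pow_of_pow_eq_one hζn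
  have hk1 : 1 ≤ k := by
    rcases Nat.eq_zero_or_pos k with h0 | h
    · exfalso; apply hζ1; rw [← hke, h0, pow_zero]
    · exact h
  have key : ‖z i + z j‖ ≤
      ‖1 + Complex.exp (2 * Real.pi * Complex.I / n)‖ := by
    have hsplit : z i + z j = z i * (1 + ζ) := by
      rw [hζ]; field_simp
    rw [hsplit, norm_mul, hone, one_mul]
    have e1 : (1:ℂ) + ζ = 1 + Complex.exp (((2 * Real.pi * k / n : ℝ) : ℂ) * Complex.I) := by
      rw [← hke, ← Complex.exp_nat_mul]
      congr 2
      push_cast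
      ring
    have e2 : Complex.exp (2 * Real.pi * Complex.I / n) =
        Complex.exp (((2 * Real.pi / n : ℝ) : ℂ) * Complex.I) := by
      congr 1; push_cast; ring
    rw [e1, e2]
    exact aux_abs_le _ _ (aux_cos n k hn hk1 hkn)
  have hm : 1 < m := by
    rw [← Fintype.card_fin m]; exact Fintype.one_lt_card_iff.mpr ⟨i, j, hij'⟩
  have hsum : ∑ x, z x = (∑ x ∈ ({i, j} : Finset (Fin m))ᶜ, z x) + (z i + z j) := by
    rw [← Finset.sum_compl_add_sum ({i, j} : Finset (Fin m)) z,
      Finset.sum_pair hij']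
  have hcard : (({i, j} : Finset (Fin m))ᶜ).card = m - 2 := by
    rw [Finset.card_compl, Finset.card_pair hij', Fintype.card_fin]
  have hrest : ‖∑ x ∈ ({i, j} : Finset (Fin m))ᶜ, z x‖ ≤ (m : ℝ) - 2 := by
    calc ‖∑ x ∈ ({i, j} : Finset (Fin m))ᶜ, z x‖
        ≤ ∑ x ∈ ({i, j} : Finset (Fin m))ᶜ, ‖z x‖ :=
          norm_sum_le _ _
      _ = (m : ℝ) - 2 := by
          simp only [hone, Finset.sum_const, nsmul_eq_mul, mul_one, hcard]
          push_cast [Nat.cast_sub (by omega : 2 ≤ m)]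
          ring
  calc ‖∑ x, z x‖
      ≤ ‖∑ x ∈ ({i, j} : Finset (Fin m))ᶜ, z x‖ + ‖z i + z j‖ := by
        rw [hsum]; exact norm_add_le _ _
    _ ≤ ((m : ℝ) - 2) + ‖1 + Complex.exp (2 * Real.pi * Complex.I / n)‖ :=
        add_le_add hrest key
end

section
/- Let E be a nonzero finite-dimensional complex inner product space, let m ≥ 1, and let U₁,…,U_m : E → E be unitary linear maps (linear isometric bijections). If the operator norm of (1/m)·∑_{i=1}^{m} Uᵢ equals 1, then there exists a vector v ∈ E with ‖v‖ = 1 such that Uᵢ v = Uⱼ v for all i, j; in particular, every element of the group generated by the maps Uᵢ⁻¹Uⱼ fixes v. -/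
open scoped InnerProductSpace


theorem attain' {E : Type*} [NormedAddCommGroup E] [NormedSpace ℂ E] [FiniteDimensional ℂ E]
    [Nontrivial E] (A : E →L[ℂ] E) : ∃ v : E, ‖v‖ = 1 ∧ ‖A v‖ = ‖A‖ := by
  have hne : (Metric.sphere (0:E) 1).Nonempty := NormedSpace.sphere_nonempty.2 zero_le_one
  obtain ⟨v, hv, hmax⟩ := (isCompact_sphere (0:E) 1).exists_isMaxOn hne
      (continuous_norm.comp A.continuous).continuousOn
  rw [mem_sphere_zero_iff_norm] at hv
  refine ⟨v, hv, le_antisymm (A.unit_le_opNorm v hv.le) ?_⟩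
  apply A.opNorm_le_bound (norm_nonneg _)
  intro x
  rcases eq_or_ne x 0 with rfl | hx
  · simp
  · have hxn : ‖x‖ ≠ 0 := norm_ne_zero_iff.2 hx
    have hmem : ((‖x‖:ℂ)⁻¹ • x) ∈ Metric.sphere (0:E) 1 := by
      simp [mem_sphere_zero_iff_norm, norm_smul, inv_mul_cancel₀ hxn]
    have h2 : ‖x‖⁻¹ * ‖A x‖ ≤ ‖A v‖ := by
      simpa [Function.comp, map_smul, norm_smul] using hmax hmem
    calc ‖A x‖ = ‖x‖ * (‖x‖⁻¹ * ‖A x‖) := by field_simp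
    _ ≤ ‖x‖ * ‖A v‖ := by nlinarith [norm_nonneg x]
    _ = ‖A v‖ * ‖x‖ := mul_comm _ _

/-- Let `E` be a nonzero finite-dimensional complex inner product space,
`m ≥ 1`, and `U₁, …, U_m` unitary maps on `E`. If `‖(1/m) ∑ᵢ Uᵢ‖ = 1` (operator norm),
then there is a unit vector `v` with `Uᵢ v = Uⱼ v` for all `i, j`; in particular every
element of the subgroup generated by the `Uᵢ⁻¹ Uⱼ` fixes `v`. -/
theorem stmt11 {E : Type*} [NormedAddCommGroup E] [InnerProductSpace ℂ E]
    [FiniteDimensional ℂ E] [Nontrivial E]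
    (m : ℕ) (hm : 1 ≤ m) (U : Fin m → (E ≃ₗᵢ[ℂ] E))
    (hnorm : ‖(m : ℂ)⁻¹ • ∑ i, ((U i).toLinearIsometry.toContinuousLinearMap)‖ = 1) :
    ∃ v : E, ‖v‖ = 1 ∧ (∀ i j, U i v = U j v) ∧
      ∀ W ∈ Subgroup.closure {w : E ≃ₗᵢ[ℂ] E | ∃ i j, w = (U i)⁻¹ * (U j)},
        W v = v := by
  obtain ⟨v, hv1, hvA⟩ := attain' ((m : ℂ)⁻¹ • ∑ i, ((U i).toLinearIsometry.toContinuousLinearMap))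
  rw [hnorm] at hvA
  set x : Fin m → E := fun i => U i v with hxdef
  have hxn : ∀ i, ‖x i‖ = 1 := fun i => by simp [hxdef, hv1]
  have hmpos : (0:ℝ) < m := by exact_mod_cast hm
  have hsum : ‖∑ i, x i‖ = m := by
    have : ‖((m:ℂ)⁻¹ • ∑ i, ((U i).toLinearIsometry.toContinuousLinearMap)) v‖ = 1 := hvA
    simp only [ContinuousLinearMap.smul_apply, ContinuousLinearMap.sum_apply, norm_smul,
      norm_inv, Complex.norm_natCast] at this
    have hx : ((m:ℝ))⁻¹ * ‖∑ i, x i‖ = 1 := by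
      simpa [hxdef] using this
    field_simp at hx
    linarith [hx]
  -- Re inner sums
  have key : ∀ p : Fin m × Fin m, RCLike.re (⟪x p.1, x p.2⟫_ℂ) = 1 := by
    have hle : ∀ p ∈ (Finset.univ : Finset (Fin m × Fin m)),
        RCLike.re (⟪x p.1, x p.2⟫_ℂ) ≤ (1:ℝ) := by
      intro p _
      calc RCLike.re (⟪x p.1, x p.2⟫_ℂ) ≤ ‖x p.1‖ * ‖x p.2‖ := re_inner_le_norm _ _
      _ = 1 := by rw [hxn, hxn, one_mul]
    have hsumeq : ∑ p : Fin m × Fin m, RCLike.re (⟪x p.1, x p.2⟫_ℂ) = (m:ℝ) * m := by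
      have h1 : (⟪∑ i, x i, ∑ j, x j⟫_ℂ) = ∑ p : Fin m × Fin m, ⟪x p.1, x p.2⟫_ℂ := by
        rw [sum_inner, ← Finset.univ_product_univ, Finset.sum_product]
        simp [inner_sum]
      have h2 : RCLike.re (⟪∑ i, x i, ∑ j, x j⟫_ℂ) = (m:ℝ) * m := by
        rw [@inner_self_eq_norm_sq ℂ, hsum]; ring
      rw [h1] at h2
      rw [← h2, map_sum]
    have htot : ∑ p ∈ (Finset.univ : Finset (Fin m × Fin m)),
        RCLike.re (⟪x p.1, x p.2⟫_ℂ) = ∑ _p ∈ (Finset.univ : Finset (Fin m × Fin m)), (1:ℝ) := by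
      rw [hsumeq]; simp [mul_comm]
    intro p
    exact (Finset.sum_eq_sum_iff_of_le hle).mp htot p (Finset.mem_univ p)
  have hij : ∀ i j, U i v = U j v := by
    intro i j
    have h0 : ‖x i - x j‖ ^ 2 = 0 := by
      rw [@norm_sub_sq ℂ, hxn, hxn]
      have := key (i, j)
      simp only at this
      rw [this]; ring
    have := pow_eq_zero_iff (n := 2) (by norm_num) |>.mp h0
    have := norm_eq_zero.mp this
    have := sub_eq_zero.mp this
    exact this
  refine ⟨v, hv1, hij, ?_⟩
  intro W hW
  induction hW using Subgroup.closure_induction with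
  | mem w hw =>
      obtain ⟨i, j, rfl⟩ := hw
      show (U i)⁻¹ (U j v) = v
      rw [← hij i j]
      exact (U i).symm_apply_apply v
  | one => rfl
  | mul a b _ _ ha hb => show a (b v) = v; rw [hb, ha]
  | inv a _ ha =>
      show a⁻¹ v = v
      conv_lhs => rw [← ha]
      exact (a).symm_apply_apply v
end

section
/- Let G be a finite group and S ⊆ G a nonempty subset such that the subgroup of G generated by {s⁻¹t : s, t ∈ S} contains the commutator subgroup [G,G]. Let ρ be an irreducible unitary representation of G on a finite-dimensional complex inner product space V with dim V ≥ 2 (so each ρ(g) is a unitary map on V). Then the operator norm of (1/|S|)·∑_{s ∈ S} ρ(s⁻¹) is strictly less than 1. -/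
open Module
open scoped commutatorElement

local notation "⟪" x ", " y "⟫" => @inner ℂ _ _ x y

/-- Norm attainment for operators on a finite-dimensional space. -/
lemma aux_exists_max {V : Type*} [NormedAddCommGroup V] [InnerProductSpace ℂ V]
    [FiniteDimensional ℂ V] [Nontrivial V] (T : V →L[ℂ] V) :
    ∃ v : V, ‖v‖ = 1 ∧ ‖T‖ ≤ ‖T v‖ := by
  have hc : IsCompact (Metric.sphere (0 : V) 1) := isCompact_sphere 0 1
  have hne : (Metric.sphere (0 : V) 1).Nonempty := NormedSpace.sphere_nonempty.mpr zero_le_one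
  obtain ⟨v, hv, hmax⟩ := hc.exists_isMaxOn hne
    ((continuous_norm.comp T.continuous).continuousOn)
  rw [mem_sphere_zero_iff_norm] at hv
  refine ⟨v, hv, ?_⟩
  refine T.opNorm_le_bound (norm_nonneg _) fun x => ?_
  rcases eq_or_ne x 0 with rfl | hx
  · simp
  · have hxn : ‖x‖ ≠ 0 := norm_ne_zero_iff.mpr hx
    have hu : ‖(‖x‖ : ℂ)⁻¹ • x‖ = 1 := by
      rw [norm_smul, norm_inv, Complex.norm_real, Real.norm_eq_abs,
        abs_of_nonneg (norm_nonneg x), inv_mul_cancel₀ hxn]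
    have h2 := hmax (mem_sphere_zero_iff_norm.mpr hu)
    have h3 : ‖T ((‖x‖ : ℂ)⁻¹ • x)‖ = ‖x‖⁻¹ * ‖T x‖ := by
      rw [map_smul, norm_smul, norm_inv, Complex.norm_real, Real.norm_eq_abs,
        abs_of_nonneg (norm_nonneg x)]
    have h4 : ‖x‖⁻¹ * ‖T x‖ ≤ ‖T v‖ :=
      h3 ▸ (hmax (mem_sphere_zero_iff_norm.mpr hu) : _)
    calc ‖T x‖ = ‖x‖ * (‖x‖⁻¹ * ‖T x‖) := by field_simp
    _ ≤ ‖x‖ * ‖T v‖ := by gcongr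
    _ = ‖T v‖ * ‖x‖ := mul_comm _ _

theorem stmt14 {G : Type*} [Group G] [Fintype G] [DecidableEq G]
    (S : Finset G) (hS : S.Nonempty)
    (hgen : commutator G ≤
      Subgroup.closure {x : G | ∃ s ∈ S, ∃ t ∈ S, x = s⁻¹ * t})
    {V : Type*} [NormedAddCommGroup V] [InnerProductSpace ℂ V] [FiniteDimensional ℂ V]
    (ρ : G →* (V ≃ₗᵢ[ℂ] V))
    (hirr : ∀ W : Submodule ℂ V, (∀ g : G, ∀ v ∈ W, ρ g v ∈ W) → W = ⊥ ∨ W = ⊤)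
    (hdim : 2 ≤ Module.finrank ℂ V) :
    ‖((S.card : ℂ))⁻¹ • ∑ s ∈ S, ((ρ s⁻¹).toLinearIsometry.toContinuousLinearMap)‖ < 1 := by
  classical
  have hV : Nontrivial V := nontrivial_of_finrank_pos (R := ℂ) (by omega)
  set T : V →L[ℂ] V :=
    ((S.card : ℂ))⁻¹ • ∑ s ∈ S, ((ρ s⁻¹).toLinearIsometry.toContinuousLinearMap) with hT
  have hcard : (0 : ℝ) < S.card := by exact_mod_cast Finset.card_pos.mpr hS
  have hsum_le : ‖∑ s ∈ S, ((ρ s⁻¹).toLinearIsometry.toContinuousLinearMap)‖ ≤ S.card := by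
    refine le_trans (norm_sum_le _ _) ?_
    have h := Finset.sum_le_card_nsmul S
      (fun s => ‖(ρ s⁻¹).toLinearIsometry.toContinuousLinearMap‖) 1
      (fun s _ => LinearIsometry.norm_toContinuousLinearMap_le _)
    rw [nsmul_eq_mul, mul_one] at h
    exact h
  have hTle : ‖T‖ ≤ 1 := by
    calc ‖T‖ ≤ ‖((S.card : ℂ))⁻¹‖ *
        ‖∑ s ∈ S, ((ρ s⁻¹).toLinearIsometry.toContinuousLinearMap)‖ :=
          ContinuousLinearMap.opNorm_smul_le _ _
    _ ≤ (S.card : ℝ)⁻¹ * S.card := by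
        rw [norm_inv, Complex.norm_natCast]; gcongr
    _ = 1 := inv_mul_cancel₀ hcard.ne'
  by_contra hlt
  push_neg at hlt
  obtain ⟨v, hv1, hvmax⟩ := aux_exists_max T
  have hTv : ‖T v‖ = 1 := by
    refine le_antisymm ?_ (le_trans hlt hvmax)
    calc ‖T v‖ ≤ ‖T‖ * ‖v‖ := T.le_opNorm v
    _ = ‖T‖ := by rw [hv1, mul_one]
    _ ≤ 1 := hTle
  set w : G → V := fun s => ρ s⁻¹ v with hwdef
  have hw1 : ∀ s : G, ‖w s‖ = 1 := fun s => by
    simp [hwdef, (ρ s⁻¹).norm_map, hv1]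
  have hTv' : T v = ((S.card : ℂ))⁻¹ • ∑ s ∈ S, w s := by
    simp [hT, ContinuousLinearMap.sum_apply, hwdef]
  have hsum : ‖∑ s ∈ S, w s‖ = (S.card : ℝ) := by
    have h1 : (1 : ℝ) = (S.card : ℝ)⁻¹ * ‖∑ s ∈ S, w s‖ := by
      rw [← hTv, hTv', norm_smul, norm_inv, Complex.norm_natCast]
    field_simp at h1
    linarith
  -- expand the square of the norm as a double sum of inner products
  have hinner : ∀ s ∈ S, ∀ t ∈ S, RCLike.re ⟪w s, w t⟫ = 1 := by
    have expand : ((S.card : ℝ)) ^ 2 = ∑ p ∈ S ×ˢ S, RCLike.re ⟪w p.1, w p.2⟫ := by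
      have h0 : ‖∑ s ∈ S, w s‖ ^ 2 = RCLike.re ⟪∑ s ∈ S, w s, ∑ t ∈ S, w t⟫ :=
        norm_sq_eq_re_inner _
      rw [hsum] at h0
      rw [h0, sum_inner, map_sum]
      simp_rw [inner_sum, map_sum]
      rw [← Finset.sum_product']
    have hle : ∀ p ∈ S ×ˢ S, RCLike.re ⟪w p.1, w p.2⟫ ≤ 1 := by
      intro p _
      have := re_inner_le_norm (𝕜 := ℂ) (w p.1) (w p.2)
      rwa [hw1, hw1, mul_one] at this
    have htotal : ∑ p ∈ S ×ˢ S, RCLike.re ⟪w p.1, w p.2⟫ = ∑ _p ∈ S ×ˢ S, (1 : ℝ) := by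
      rw [← expand]
      simp [Finset.card_product]
      ring
    have := (Finset.sum_eq_sum_iff_of_le hle).mp htotal
    intro s hs t ht
    exact this (s, t) (Finset.mem_product.mpr ⟨hs, ht⟩)
  have hweq : ∀ s ∈ S, ∀ t ∈ S, w s = w t := by
    intro s hs t ht
    have h2 : ‖w s - w t‖ ^ 2 = 0 := by
      rw [@norm_sub_sq ℂ, hw1, hw1, hinner s hs t ht]; ring
    have h3 : ‖w s - w t‖ = 0 := by
      exact (pow_eq_zero_iff two_ne_zero).mp h2
    rw [norm_eq_zero, sub_eq_zero] at h3
    exact h3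
  obtain ⟨s₀, hs₀⟩ := hS
  set w0 : V := w s₀ with hw0def
  have hw0 : ‖w0‖ = 1 := hw1 s₀
  -- composition facts
  have hmul : ∀ a b : G, ∀ u : V, ρ (a * b) u = ρ a (ρ b u) := by
    intro a b u
    rw [map_mul]
    rfl
  -- every generator fixes w0
  have hgenfix : ∀ x ∈ {x : G | ∃ s ∈ S, ∃ t ∈ S, x = s⁻¹ * t}, ρ x w0 = w0 := by
    rintro x ⟨s, hs, t, ht, rfl⟩
    have h1 : w0 = w t := hweq s₀ hs₀ t ht
    have h2 : ρ (s⁻¹ * t) (w t) = w s := by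
      show ρ (s⁻¹ * t) (ρ t⁻¹ v) = ρ s⁻¹ v
      rw [← hmul]
      congr 1
      group
    rw [h1, h2]
    exact hweq s hs t ht
  -- the stabilizer of w0 is a subgroup containing the commutator subgroup
  set H : Subgroup G :=
    { carrier := {g : G | ρ g w0 = w0}
      one_mem' := by simp
      mul_mem' := fun {a b} ha hb => by
        simp only [Set.mem_setOf_eq] at *
        rw [hmul, hb, ha]
      inv_mem' := fun {a} ha => by
        simp only [Set.mem_setOf_eq] at *
        conv_lhs => rw [← ha]
        rw [← hmul, inv_mul_cancel, map_one]
        rfl } with hHdef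
  have hcommfix : ∀ g ∈ commutator G, ρ g w0 = w0 := by
    intro g hg
    exact (Subgroup.closure_le H).mpr hgenfix (hgen hg)
  -- the fixed space of the commutator subgroup
  set W : Submodule ℂ V :=
    { carrier := {u : V | ∀ g ∈ commutator G, ρ g u = u}
      add_mem' := fun {a b} ha hb g hg => by rw [map_add, ha g hg, hb g hg]
      zero_mem' := fun g hg => map_zero _
      smul_mem' := fun c u hu g hg => by rw [map_smul, hu g hg] } with hWdef
  have hWinv : ∀ g : G, ∀ u ∈ W, ρ g u ∈ W := by
    intro g u hu c hc
    have hc' : g⁻¹ * c * g ∈ commutator G := by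
      have := Subgroup.Normal.conj_mem (inferInstance) c hc g⁻¹
      simpa using this
    have : ρ c (ρ g u) = ρ g (ρ (g⁻¹ * c * g) u) := by
      rw [← hmul, ← hmul]
      congr 1
      group
    rw [this, hu _ hc']
  have hWtop : W = ⊤ := by
    refine (hirr W hWinv).resolve_left ?_
    intro hbot
    have hw0W : w0 ∈ W := hcommfix
    rw [hbot, Submodule.mem_bot] at hw0W
    rw [hw0W, norm_zero] at hw0
    norm_num at hw0
  have htriv : ∀ u : V, ∀ g ∈ commutator G, ρ g u = u := by
    intro u g hg
    have : u ∈ W := hWtop ▸ Submodule.mem_top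
    exact this g hg
  -- hence all ρ g commute
  have hcomm2 : ∀ g h : G, ∀ u : V, ρ g (ρ h u) = ρ h (ρ g u) := by
    intro g h u
    have hc : ⁅g, h⁆ ∈ commutator G := by
      rw [commutator_def]
      exact Subgroup.commutator_mem_commutator (Subgroup.mem_top g) (Subgroup.mem_top h)
    have h1 := htriv (ρ (h * g) u) _ hc
    have h2 : ρ (⁅g, h⁆) (ρ (h * g) u) = ρ (g * h) u := by
      rw [← hmul]
      congr 1
      group
    rw [h2] at h1
    rw [← hmul, ← hmul, h1]
  -- each ρ g is a scalar
  have hscalar : ∀ g : G, ∃ μ : ℂ, ∀ u : V, ρ g u = μ • u := by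
    intro g
    set f : Module.End ℂ V := ((ρ g).toLinearEquiv : V →ₗ[ℂ] V) with hfdef
    obtain ⟨μ, hμ⟩ := Module.End.exists_eigenvalue f
    have hne : f.eigenspace μ ≠ ⊥ := hμ
    have hinv : ∀ h : G, ∀ u ∈ f.eigenspace μ, ρ h u ∈ f.eigenspace μ := by
      intro h u hu
      rw [Module.End.mem_eigenspace_iff] at hu ⊢
      show ρ g (ρ h u) = μ • ρ h u
      rw [hcomm2 g h u]
      have hu' : ρ g u = μ • u := hu
      rw [hu', map_smul]
    have htop : f.eigenspace μ = ⊤ := (hirr _ hinv).resolve_left hne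
    refine ⟨μ, fun u => ?_⟩
    have : u ∈ f.eigenspace μ := htop ▸ Submodule.mem_top
    exact Module.End.mem_eigenspace_iff.mp this
  -- contradiction with dim ≥ 2
  obtain ⟨x, hx⟩ := exists_ne (0 : V)
  have hspan : ∀ g : G, ∀ u ∈ Submodule.span ℂ {x}, ρ g u ∈ Submodule.span ℂ {x} := by
    intro g u hu
    obtain ⟨c, rfl⟩ := Submodule.mem_span_singleton.mp hu
    obtain ⟨μ, hμ⟩ := hscalar g
    rw [map_smul, hμ]
    exact Submodule.smul_mem _ _ (Submodule.smul_mem _ _ (Submodule.mem_span_singleton_self x))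
  have hb : Submodule.span ℂ {x} = ⊤ := by
    refine (hirr _ hspan).resolve_left ?_
    intro h
    exact hx (Submodule.span_singleton_eq_bot.mp h)
  have hone : finrank ℂ V = 1 := by
    rw [← finrank_top ℂ V, ← hb, finrank_span_singleton hx]
  omega
end
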